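/- Let k ∈ ℝ³ be nonzero and let h be a trace-free real symmetric 3×3 matrix. Then σ_k(H)(h) = 0 if and only if there exists a vector Y ∈ ℝ³ such that h_{ij} = k_i Y_j + k_j Y_i − (2/3) (Σ_ℓ k_ℓ Y_ℓ) δ_{ij}; that is, the kernel of the symbol of the linearised Cotton operator H on trace-free symmetric matrices equals the image of the symbol of the conformal Killing operator L. -/

import Mathlib

open scoped BigOperators

/-- The Levi-Civita symbol `ε_{ijk}` on three indices. -/
def eps : Fin 3 → Fin 3 → Fin 3 → ℝ := fun i j k =>
  if (i, j, k) = ((0 : Fin 3), (1 : Fin 3), (2 : Fin 3)) ∨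
     (i, j, k) = ((1 : Fin 3), (2 : Fin 3), (0 : Fin 3)) ∨
     (i, j, k) = ((2 : Fin 3), (0 : Fin 3), (1 : Fin 3)) then 1
  else if (i, j, k) = ((2 : Fin 3), (1 : Fin 3), (0 : Fin 3)) ∨
     (i, j, k) = ((1 : Fin 3), (0 : Fin 3), (2 : Fin 3)) ∨
     (i, j, k) = ((0 : Fin 3), (2 : Fin 3), (1 : Fin 3)) then -1
  else 0

/-- The Kronecker delta `δ_{ij}`. -/
def kdelta (i j : Fin 3) : ℝ := if i = j then 1 else 0

/-- The cross product on `ℝ³`: `(a × b)_i = Σ_{j,l} ε_{ijl} a_j b_l`. -/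
def cross (a b : Fin 3 → ℝ) : Fin 3 → ℝ := fun i => ∑ j, ∑ l, eps i j l * a j * b l

/-- The symbol of `rot₂`:
`(σ_k(rot₂)(h))_{ij} = Σ_{ℓ,m} ( ε_{iℓm} k_ℓ h_{mj} + ε_{jℓm} k_ℓ h_{mi} )`. -/
def sigRot2 (k : Fin 3 → ℝ) (h : Fin 3 → Fin 3 → ℝ) : Fin 3 → Fin 3 → ℝ :=
  fun i j => ∑ l, ∑ m, (eps i l m * k l * h m j + eps j l m * k l * h m i)

/-- The symbol of the linearised Cotton operator `H`:
`(σ_k(H)(h))_{ij} = 4( Σ_{n,ℓ,m} k_n k_ℓ ( k_i ε_{jℓm} + k_j ε_{iℓm} ) h_{mn}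
  − |k|² Σ_{ℓ,m} k_ℓ ( ε_{iℓm} h_{mj} + ε_{jℓm} h_{mi} ) )`. -/
def sigH (k : Fin 3 → ℝ) (h : Fin 3 → Fin 3 → ℝ) : Fin 3 → Fin 3 → ℝ :=
  fun i j => 4 * ((∑ n, ∑ l, ∑ m, k n * k l * (k i * eps j l m + k j * eps i l m) * h m n)
    - (∑ l, k l ^ 2) * (∑ l, ∑ m, k l * (eps i l m * h m j + eps j l m * h m i)))

lemma eps_000 : eps 0 0 0 = 0 := rfl
lemma eps_001 : eps 0 0 1 = 0 := rfl
lemma eps_002 : eps 0 0 2 = 0 := rfl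
lemma eps_010 : eps 0 1 0 = 0 := rfl
lemma eps_011 : eps 0 1 1 = 0 := rfl
lemma eps_012 : eps 0 1 2 = 1 := rfl
lemma eps_020 : eps 0 2 0 = 0 := rfl
lemma eps_021 : eps 0 2 1 = (-1) := rfl
lemma eps_022 : eps 0 2 2 = 0 := rfl
lemma eps_100 : eps 1 0 0 = 0 := rfl
lemma eps_101 : eps 1 0 1 = 0 := rfl
lemma eps_102 : eps 1 0 2 = (-1) := rfl
lemma eps_110 : eps 1 1 0 = 0 := rfl
lemma eps_111 : eps 1 1 1 = 0 := rfl
lemma eps_112 : eps 1 1 2 = 0 := rfl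
lemma eps_120 : eps 1 2 0 = 1 := rfl
lemma eps_121 : eps 1 2 1 = 0 := rfl
lemma eps_122 : eps 1 2 2 = 0 := rfl
lemma eps_200 : eps 2 0 0 = 0 := rfl
lemma eps_201 : eps 2 0 1 = 1 := rfl
lemma eps_202 : eps 2 0 2 = 0 := rfl
lemma eps_210 : eps 2 1 0 = (-1) := rfl
lemma eps_211 : eps 2 1 1 = 0 := rfl
lemma eps_212 : eps 2 1 2 = 0 := rfl
lemma eps_220 : eps 2 2 0 = 0 := rfl
lemma eps_221 : eps 2 2 1 = 0 := rfl
lemma eps_222 : eps 2 2 2 = 0 := rfl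
lemma kdelta_00 : kdelta 0 0 = 1 := rfl
lemma kdelta_01 : kdelta 0 1 = 0 := rfl
lemma kdelta_02 : kdelta 0 2 = 0 := rfl
lemma kdelta_10 : kdelta 1 0 = 0 := rfl
lemma kdelta_11 : kdelta 1 1 = 1 := rfl
lemma kdelta_12 : kdelta 1 2 = 0 := rfl
lemma kdelta_20 : kdelta 2 0 = 0 := rfl
lemma kdelta_21 : kdelta 2 1 = 0 := rfl
lemma kdelta_22 : kdelta 2 2 = 1 := rfl
lemma fmk0 : (⟨0, by norm_num⟩ : Fin 3) = 0 := rfl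
lemma fmk1 : (⟨1, by norm_num⟩ : Fin 3) = 1 := rfl
lemma fmk2 : (⟨2, by norm_num⟩ : Fin 3) = 2 := rfl

set_option maxHeartbeats 1000000 in
/-- `σ_k(H) ∘ σ_k(L) = 0`. -/
theorem sigHL (k Y : Fin 3 → ℝ) (i j : Fin 3) :
    sigH k (fun a b => k a * Y b + k b * Y a - (2/3) * (∑ l, k l * Y l) * kdelta a b) i j = 0 := by
  fin_cases i <;> fin_cases j <;>
    · simp only [fmk0, fmk1, fmk2]
      simp only [sigH, Fin.sum_univ_three, eps_000, eps_001, eps_002, eps_010, eps_011, eps_012,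
        eps_020, eps_021, eps_022, eps_100, eps_101, eps_102, eps_110, eps_111, eps_112, eps_120,
        eps_121, eps_122, eps_200, eps_201, eps_202, eps_210, eps_211, eps_212, eps_220, eps_221,
        eps_222, kdelta_00, kdelta_01, kdelta_02, kdelta_10, kdelta_11, kdelta_12, kdelta_20,
        kdelta_21, kdelta_22]
      ring

set_option maxHeartbeats 2000000 in
/-- Master identity: `ĝ = ½ C(σ_k(H)h)` for symmetric trace-free `h`. -/
theorem master (k : Fin 3 → ℝ) (h : Fin 3 → Fin 3 → ℝ)
    (h_symm : ∀ i j, h i j = h j i) (h_tracefree : ∑ i, h i i = 0) (i j : Fin 3) :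
    4 * (∑ l, k l ^ 2) ^ 2 * h i j =
      k i * (4 * (∑ l, k l ^ 2) * (∑ n, h j n * k n) - (∑ a, ∑ b, k a * h a b * k b) * k j)
      + k j * (4 * (∑ l, k l ^ 2) * (∑ n, h i n * k n) - (∑ a, ∑ b, k a * h a b * k b) * k i)
      - (2/3) * (∑ l, k l * (4 * (∑ m, k m ^ 2) * (∑ n, h l n * k n)
          - (∑ a, ∑ b, k a * h a b * k b) * k l)) * kdelta i j
      + (1/2) * ∑ l, ∑ m, eps i l m * k l * sigH k h m j := by
  have h10 : h 1 0 = h 0 1 := h_symm 1 0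
  have h20 : h 2 0 = h 0 2 := h_symm 2 0
  have h21 : h 2 1 = h 1 2 := h_symm 2 1
  have h22 : h 2 2 = -h 0 0 - h 1 1 := by
    have := h_tracefree; rw [Fin.sum_univ_three] at this; linarith
  fin_cases i <;> fin_cases j <;>
    · simp only [fmk0, fmk1, fmk2]
      simp only [sigH, Fin.sum_univ_three, eps_000, eps_001, eps_002, eps_010, eps_011, eps_012,
        eps_020, eps_021, eps_022, eps_100, eps_101, eps_102, eps_110, eps_111, eps_112, eps_120,
        eps_121, eps_122, eps_200, eps_201, eps_202, eps_210, eps_211, eps_212, eps_220, eps_221,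
        eps_222, kdelta_00, kdelta_01, kdelta_02, kdelta_10, kdelta_11, kdelta_12, kdelta_20,
        kdelta_21, kdelta_22, h10, h20, h21, h22]
      ring

set_option maxRecDepth 10000 in
set_option maxHeartbeats 4000000 in
/-- for `k ≠ 0` and trace-free symmetric `h`, `σ_k(H)(h) = 0` iff
`h_{ij} = k_i Y_j + k_j Y_i − (2/3) (Σ_ℓ k_ℓ Y_ℓ) δ_{ij}` for some `Y ∈ ℝ³`; the kernel
of the symbol of `H` on trace-free symmetric matrices equals the image of the symbol of
the conformal Killing operator `L`. -/
theorem stmt16 (k : Fin 3 → ℝ) (hk : k ≠ 0) (h : Fin 3 → Fin 3 → ℝ)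
    (h_symm : ∀ i j, h i j = h j i) (h_tracefree : ∑ i, h i i = 0) :
    (∀ i j, sigH k h i j = 0) ↔
      ∃ Y : Fin 3 → ℝ, ∀ i j,
        h i j = k i * Y j + k j * Y i - (2/3) * (∑ l, k l * Y l) * kdelta i j := by
  have hq : (∑ l, k l ^ 2) ≠ 0 := by
    obtain ⟨n, hn⟩ := Function.ne_iff.mp hk
    rw [Fin.sum_univ_three]
    fin_cases n <;>
      · simp only [fmk0, fmk1, fmk2, Pi.zero_apply] at hn
        positivity
  constructor
  · intro E
    refine ⟨fun j => (4 * (∑ l, k l ^ 2) * (∑ n, h j n * k n)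
      - (∑ a, ∑ b, k a * h a b * k b) * k j) / (4 * (∑ l, k l ^ 2) ^ 2), fun i j => ?_⟩
    have M := master k h h_symm h_tracefree i j
    simp only [E, mul_zero, Finset.sum_const_zero, add_zero] at M
    have hD : (4 : ℝ) * (∑ l, k l ^ 2) ^ 2 ≠ 0 := by positivity
    simp only [Fin.sum_univ_three] at M hD ⊢
    have hq' : k 0 ^ 2 + k 1 ^ 2 + k 2 ^ 2 ≠ 0 := by simpa only [Fin.sum_univ_three] using hq
    field_simp
    linear_combination 3 * M
  · rintro ⟨Y, hY⟩ i j
    have hfun : h = fun a b => k a * Y b + k b * Y a - (2/3) * (∑ l, k l * Y l) * kdelta a b :=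
      funext fun a => funext fun b => hY a b
    rw [hfun]
    exact sigHL k Y i j
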